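/- Let φ'_0 = (x_1), ψ'_0 = (x_2), and inductively define φ'_{m+1} = [[φ'_m, x_{2m+1}·I], [x_{2m+2}·I, -ψ'_m]] and ψ'_{m+1} = [[ψ'_m, x_{2m+1}·I], [x_{2m+2}·I, -φ'_m]]. Then φ'_m · ψ'_m = (x_1 x_2 + x_3 x_4 + ... + x_{2m-1} x_{2m}) · I, i.e., (φ'_m, ψ'_m) is a matrix factorization of x_1 x_2 + ... + x_{2m-1} x_{2m}. -/

import Mathlib

open MvPolynomial Matrix

/-- Index type of size `2^m`. -/
def SpinIdx : ℕ → Type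
  | 0 => Unit
  | m + 1 => SpinIdx m ⊕ SpinIdx m

instance spinIdxFintype : (m : ℕ) → Fintype (SpinIdx m)
  | 0 => inferInstanceAs (Fintype Unit)
  | m + 1 => letI := spinIdxFintype m; inferInstanceAs (Fintype (SpinIdx m ⊕ SpinIdx m))

instance spinIdxDecEq : (m : ℕ) → DecidableEq (SpinIdx m)
  | 0 => inferInstanceAs (DecidableEq Unit)
  | m + 1 => letI := spinIdxDecEq m; inferInstanceAs (DecidableEq (SpinIdx m ⊕ SpinIdx m))

-- The matrices `φ'` and `ψ'` over `k[x_1, x_2, …]`.  Here `phiMat' k m` is the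
-- `2^m × 2^m` matrix `φ'_{m+1}` of the paper (so the base case is `φ'_1 = (x_1)`,
-- `ψ'_1 = (x_2)`), and the inductive step forms the block matrices
-- `φ'_{m+1} = [[φ'_m, x_{2m+1}·I], [x_{2m+2}·I, -ψ'_m]]` and
-- `ψ'_{m+1} = [[ψ'_m, x_{2m+1}·I], [x_{2m+2}·I, -φ'_m]]`.
mutual
  noncomputable def phiMat' (k : Type*) [CommRing k] :
      (m : ℕ) → Matrix (SpinIdx m) (SpinIdx m) (MvPolynomial ℕ k)
    | 0 => fun _ _ => X 1
    | m + 1 =>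
        Matrix.fromBlocks (phiMat' k m)
          ((X (2 * (m + 1) + 1) : MvPolynomial ℕ k) • (1 : Matrix (SpinIdx m) (SpinIdx m) (MvPolynomial ℕ k)))
          ((X (2 * (m + 1) + 2) : MvPolynomial ℕ k) • (1 : Matrix (SpinIdx m) (SpinIdx m) (MvPolynomial ℕ k)))
          (-(psiMat' k m))
  noncomputable def psiMat' (k : Type*) [CommRing k] :
      (m : ℕ) → Matrix (SpinIdx m) (SpinIdx m) (MvPolynomial ℕ k)
    | 0 => fun _ _ => X 2
    | m + 1 =>
        Matrix.fromBlocks (psiMat' k m)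
          ((X (2 * (m + 1) + 1) : MvPolynomial ℕ k) • (1 : Matrix (SpinIdx m) (SpinIdx m) (MvPolynomial ℕ k)))
          ((X (2 * (m + 1) + 2) : MvPolynomial ℕ k) • (1 : Matrix (SpinIdx m) (SpinIdx m) (MvPolynomial ℕ k)))
          (-(phiMat' k m))
end

lemma phiMat'_mul_psiMat'_aux (k : Type*) [CommRing k] (m : ℕ) :
    phiMat' k m * psiMat' k m =
      ((∑ i ∈ Finset.range (m + 1), X (2 * i + 1) * X (2 * i + 2) : MvPolynomial ℕ k)) •
        (1 : Matrix (SpinIdx m) (SpinIdx m) (MvPolynomial ℕ k)) ∧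
    psiMat' k m * phiMat' k m =
      ((∑ i ∈ Finset.range (m + 1), X (2 * i + 1) * X (2 * i + 2) : MvPolynomial ℕ k)) •
        (1 : Matrix (SpinIdx m) (SpinIdx m) (MvPolynomial ℕ k)) := by
  induction m with
  | zero =>
      have hs : ∀ i j : SpinIdx 0, i = j :=
        fun i j => @Subsingleton.elim Unit _ i j
      have hc : (Fintype.card (SpinIdx 0)) = 1 := rfl
      constructor <;>
      · ext i j : 1
        rw [Matrix.mul_apply]
        simp [phiMat', psiMat', Matrix.mul_apply, Matrix.one_apply, hs i j, hc, mul_comm]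
  | succ m ih =>
      obtain ⟨h1, h2⟩ := ih
      have key : ∀ (A B : Matrix (SpinIdx m) (SpinIdx m) (MvPolynomial ℕ k)),
          A * B = ((∑ i ∈ Finset.range (m + 1), X (2 * i + 1) * X (2 * i + 2) :
            MvPolynomial ℕ k)) • 1 →
          B * A = ((∑ i ∈ Finset.range (m + 1), X (2 * i + 1) * X (2 * i + 2) :
            MvPolynomial ℕ k)) • 1 →
          Matrix.fromBlocks A
            ((X (2 * (m + 1) + 1) : MvPolynomial ℕ k) • (1 : Matrix (SpinIdx m) (SpinIdx m) (MvPolynomial ℕ k)))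
            ((X (2 * (m + 1) + 2) : MvPolynomial ℕ k) • (1 : Matrix (SpinIdx m) (SpinIdx m) (MvPolynomial ℕ k)))
            (-B) *
          Matrix.fromBlocks B
            ((X (2 * (m + 1) + 1) : MvPolynomial ℕ k) • (1 : Matrix (SpinIdx m) (SpinIdx m) (MvPolynomial ℕ k)))
            ((X (2 * (m + 1) + 2) : MvPolynomial ℕ k) • (1 : Matrix (SpinIdx m) (SpinIdx m) (MvPolynomial ℕ k)))
            (-A) =
          ((∑ i ∈ Finset.range (m + 2), X (2 * i + 1) * X (2 * i + 2) : MvPolynomial ℕ k)) •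
            (1 : Matrix (SpinIdx m ⊕ SpinIdx m) (SpinIdx m ⊕ SpinIdx m) (MvPolynomial ℕ k)) := by
        intro A B hAB hBA
        rw [Matrix.fromBlocks_multiply, Finset.sum_range_succ,
          ← Matrix.fromBlocks_one (m := SpinIdx m), Matrix.fromBlocks_smul,
          Matrix.fromBlocks_inj]
        refine ⟨?_, ?_, ?_, ?_⟩
        · rw [hAB, Matrix.smul_mul, Matrix.mul_smul, Matrix.one_mul, smul_smul,
            add_smul]
        · simp [Matrix.mul_smul, Matrix.smul_mul]
        · simp [Matrix.mul_smul, Matrix.smul_mul]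
        · rw [Matrix.smul_mul, Matrix.mul_smul, Matrix.one_mul, smul_smul,
            neg_mul_neg, hBA, add_smul, add_comm,
            mul_comm (X (2 * (m + 1) + 2) : MvPolynomial ℕ k)]
      constructor
      · exact key _ _ h1 h2
      · exact key _ _ h2 h1

/-- `(φ'_m, ψ'_m)` is a matrix factorization of `x_1 x_2 + x_3 x_4 + ⋯ + x_{2m-1} x_{2m}`:
with the indexing above, `phiMat' k m` (which is the `2^m × 2^m` matrix `φ'_{m+1}`)
multiplied with `psiMat' k m` gives `(x_1 x_2 + ⋯ + x_{2(m+1)-1} x_{2(m+1)}) · I`. -/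
theorem phiMat'_mul_psiMat' (k : Type*) [CommRing k] (m : ℕ) :
    phiMat' k m * psiMat' k m =
      ((∑ i ∈ Finset.range (m + 1), X (2 * i + 1) * X (2 * i + 2) : MvPolynomial ℕ k)) •
        (1 : Matrix (SpinIdx m) (SpinIdx m) (MvPolynomial ℕ k)) := by
  exact (phiMat'_mul_psiMat'_aux k m).1
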